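/- Let Σ be a positive semidefinite n×n matrix with eigenvalues λ_1 ≥ λ_2 ≥ ... ≥ λ_n and let Π* be the orthogonal projection onto the span of the top r eigenvectors. Then for any symmetric matrix X with tr(X) ≤ r and 0 ⪯ X ⪯ I, we have ⟨X, Π*⟩ ≥ r − (⟨Π*, Σ⟩ − ⟨X, Σ⟩)/(λ_r − λ_{r+1}), provided λ_r > λ_{r+1}. -/

import Mathlib

open scoped BigOperators
open Matrix

private lemma trace_mul_vmv {n : ℕ} (A : Matrix (Fin n) (Fin n) ℝ) (u w : Fin n → ℝ) :
    (A * vecMulVec u w).trace = w ⬝ᵥ (A *ᵥ u) := by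
  simp [trace, diag, mul_apply, vecMulVec_apply, mulVec, dotProduct, Finset.mul_sum]
  exact Finset.sum_congr rfl fun i _ => Finset.sum_congr rfl fun j _ => by ring

private lemma trace_vmv {n : ℕ} (u w : Fin n → ℝ) : (vecMulVec u w).trace = u ⬝ᵥ w := by
  simp [trace, diag, vecMulVec_apply, dotProduct]

theorem stmt8 {n : ℕ} (r : ℕ) (hr0 : 0 < r) (hrn : r < n)
    (lam : Fin n → ℝ) (hmono : ∀ i j : Fin n, i ≤ j → lam j ≤ lam i)
    (v : Fin n → Fin n → ℝ)
    (horth : ∀ i j, (v i) ⬝ᵥ (v j) = if i = j then (1 : ℝ) else 0)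
    (S : Matrix (Fin n) (Fin n) ℝ)
    (hS : S = ∑ i, lam i • Matrix.vecMulVec (v i) (v i))
    (hpsd : S.PosSemidef)
    (Pstar : Matrix (Fin n) (Fin n) ℝ)
    (hPstar : Pstar = ∑ i ∈ Finset.univ.filter (fun i : Fin n => (i : ℕ) < r),
      Matrix.vecMulVec (v i) (v i))
    (X : Matrix (Fin n) (Fin n) ℝ) (hXsymm : X.IsSymm)
    (hXtr : X.trace ≤ (r : ℝ)) (hX0 : X.PosSemidef) (hX1 : (1 - X).PosSemidef)
    (hgap : lam ⟨r, hrn⟩ < lam ⟨r - 1, by omega⟩) :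
    (r : ℝ) - ((Pstarᵀ * S).trace - (Xᵀ * S).trace)
        / (lam ⟨r - 1, by omega⟩ - lam ⟨r, hrn⟩)
      ≤ (Xᵀ * Pstar).trace := by
  have hXt : Xᵀ = X := hXsymm
  set F : Finset (Fin n) := Finset.univ.filter (fun i : Fin n => (i : ℕ) < r) with hF
  set x : Fin n → ℝ := fun i => (v i) ⬝ᵥ (X *ᵥ v i) with hx
  set ir : Fin n := ⟨r, hrn⟩ with hir
  set ir1 : Fin n := ⟨r - 1, by omega⟩ with hir1
  -- Pstar is symmetric
  have hPt : Pstarᵀ = Pstar := by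
    rw [hPstar, Matrix.transpose_sum]
    exact Finset.sum_congr rfl fun i _ => by
      ext a b; simp [transpose_apply, vecMulVec_apply, mul_comm]
  -- products of rank-one matrices
  have hvmv : ∀ u w a b : Fin n → ℝ,
      vecMulVec u w * vecMulVec a b = (w ⬝ᵥ a) • vecMulVec u b := by
    intro u w a b
    ext i j
    simp [mul_apply, vecMulVec_apply, dotProduct, Finset.sum_mul]
    exact Finset.sum_congr rfl fun k _ => by ring
  -- v j ⬝ S v j = lam j
  have hSvv : ∀ j, (v j) ⬝ᵥ (S *ᵥ v j) = lam j := by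
    intro j
    rw [← trace_mul_vmv, hS, Matrix.sum_mul]
    rw [Matrix.trace_sum]
    have : ∀ i, ((lam i • vecMulVec (v i) (v i)) * vecMulVec (v j) (v j)).trace
        = if i = j then lam i else 0 := by
      intro i
      rw [Matrix.smul_mul, hvmv, trace_smul, trace_smul, trace_vmv, horth]
      by_cases h : i = j <;> simp [h]
    rw [Finset.sum_congr rfl fun i _ => this i]
    simp
  -- traces as sums
  have h4 : (Xᵀ * Pstar).trace = ∑ i ∈ F, x i := by
    rw [hXt, hPstar, Matrix.mul_sum, Matrix.trace_sum]
    exact Finset.sum_congr rfl fun i _ => trace_mul_vmv X (v i) (v i)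
  have h5 : (Xᵀ * S).trace = ∑ i, lam i * x i := by
    rw [hXt, hS, Matrix.mul_sum, Matrix.trace_sum]
    refine Finset.sum_congr rfl fun i _ => ?_
    rw [Matrix.mul_smul, trace_smul, trace_mul_vmv, smul_eq_mul]
  have h6 : (Pstarᵀ * S).trace = ∑ i ∈ F, lam i := by
    rw [hPt, hPstar, Matrix.sum_mul, Matrix.trace_sum]
    exact Finset.sum_congr rfl fun i _ => by
      rw [← hSvv i, ← trace_mul_vmv]; rw [Matrix.trace_mul_comm]
  -- completeness: ∑ vᵢvᵢᵀ = 1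
  have hsum1 : ∑ i, vecMulVec (v i) (v i) = (1 : Matrix (Fin n) (Fin n) ℝ) := by
    set V : Matrix (Fin n) (Fin n) ℝ := Matrix.of v with hV
    have hVVt : V * Vᵀ = 1 := by
      ext i j
      simpa [mul_apply, Matrix.one_apply, dotProduct, hV] using horth i j
    have hVtV : Vᵀ * V = 1 := mul_eq_one_comm.mp hVVt
    calc ∑ i, vecMulVec (v i) (v i) = Vᵀ * V := by
          ext i j
          simp [mul_apply, vecMulVec_apply, Matrix.sum_apply, hV]
      _ = 1 := hVtV
  have hxsum : ∑ i, x i = X.trace := by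
    have : ∀ i, x i = (X * vecMulVec (v i) (v i)).trace := fun i =>
      (trace_mul_vmv X (v i) (v i)).symm
    rw [Finset.sum_congr rfl fun i _ => this i, ← Matrix.trace_sum, ← Matrix.mul_sum, hsum1,
      Matrix.mul_one]
  -- bounds on x
  have hx0 : ∀ i, 0 ≤ x i := by
    intro i
    simpa using hX0.dotProduct_mulVec_nonneg (v i)
  have hx1 : ∀ i, x i ≤ 1 := by
    intro i
    have := hX1.dotProduct_mulVec_nonneg (v i)
    simp [Matrix.sub_mulVec, dotProduct_sub, horth] at this
    simpa [hx] using this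
  have hlam_r : 0 ≤ lam ir := by
    have := hpsd.dotProduct_mulVec_nonneg (v ir)
    simpa [hSvv ir] using this
  -- cardinality of F
  have hcard : F.card = r := by
    have : F = Finset.map (Fin.castLEEmb hrn.le) Finset.univ := by
      ext i
      simp only [hF, Finset.mem_filter, Finset.mem_univ, true_and, Finset.mem_map,
        Fin.castLEEmb, Finset.mem_univ, Function.Embedding.coeFn_mk]
      constructor
      · intro h; exact ⟨⟨(i : ℕ), h⟩, by ext; simp⟩
      · rintro ⟨j, rfl⟩; simpa using j.isLt
    rw [this, Finset.card_map, Finset.card_univ, Fintype.card_fin]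
  set a : ℝ := ∑ i ∈ F, x i with ha
  -- a ≤ r
  have haR : a ≤ (r : ℝ) := by
    calc a ≤ ∑ i ∈ F, (1 : ℝ) := Finset.sum_le_sum fun i _ => hx1 i
      _ = (r : ℝ) := by simp [hcard]
  -- split the total sum
  have hsplit : ∑ i, x i = a + ∑ i ∈ Finset.univ.filter (fun i : Fin n => ¬ (i : ℕ) < r), x i := by
    rw [ha, hF, Finset.sum_filter_add_sum_filter_not]
  set Fc : Finset (Fin n) := Finset.univ.filter (fun i : Fin n => ¬ (i : ℕ) < r) with hFc
  have hb : ∑ i ∈ Fc, x i ≤ (r : ℝ) - a := by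
    have := hxsum
    rw [hsplit] at this
    linarith [hXtr]
  have hbnn : 0 ≤ ∑ i ∈ Fc, x i := Finset.sum_nonneg fun i _ => hx0 i
  -- key lower bound on the gap
  have hlamsplit : ∑ i, lam i * x i
      = ∑ i ∈ F, lam i * x i + ∑ i ∈ Fc, lam i * x i := by
    rw [hF, hFc, Finset.sum_filter_add_sum_filter_not]
  have hFlow : (lam ir1) * ((r:ℝ) - a) ≤ ∑ i ∈ F, lam i * (1 - x i) := by
    have : ∀ i ∈ F, lam ir1 * (1 - x i) ≤ lam i * (1 - x i) := by
      intro i hi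
      have hiF : (i : ℕ) < r := by simpa [hF] using hi
      have hle : i ≤ ir1 := by
        simp only [Fin.le_def, hir1]; omega
      exact mul_le_mul_of_nonneg_right (hmono i ir1 hle) (by linarith [hx1 i])
    calc lam ir1 * ((r:ℝ) - a)
        = ∑ i ∈ F, lam ir1 * (1 - x i) := by
          rw [← Finset.mul_sum, Finset.sum_sub_distrib]
          simp [hcard, ha]
      _ ≤ ∑ i ∈ F, lam i * (1 - x i) := Finset.sum_le_sum this
  have hFchigh : ∑ i ∈ Fc, lam i * x i ≤ lam ir * ((r:ℝ) - a) := by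
    have step : ∀ i ∈ Fc, lam i * x i ≤ lam ir * x i := by
      intro i hi
      have hiFc : ¬ (i : ℕ) < r := by simpa [hFc] using hi
      have hle : ir ≤ i := by
        simp only [Fin.le_def, hir]; omega
      exact mul_le_mul_of_nonneg_right (hmono ir i hle) (hx0 i)
    calc ∑ i ∈ Fc, lam i * x i ≤ ∑ i ∈ Fc, lam ir * x i := Finset.sum_le_sum step
      _ = lam ir * ∑ i ∈ Fc, x i := (Finset.mul_sum _ _ _).symm
      _ ≤ lam ir * ((r:ℝ) - a) := mul_le_mul_of_nonneg_left hb hlam_r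
  have hDsum : ∑ i ∈ F, lam i - ∑ i, lam i * x i
      = ∑ i ∈ F, lam i * (1 - x i) - ∑ i ∈ Fc, lam i * x i := by
    rw [hlamsplit]
    rw [Finset.sum_congr rfl (fun i _ => (mul_one_sub (lam i) (x i)))]
    rw [Finset.sum_sub_distrib]
    ring
  have hD : (lam ir1 - lam ir) * ((r:ℝ) - a)
      ≤ ∑ i ∈ F, lam i - ∑ i, lam i * x i := by
    rw [hDsum]
    have : (lam ir1 - lam ir) * ((r:ℝ) - a)
        = lam ir1 * ((r:ℝ) - a) - lam ir * ((r:ℝ) - a) := by ring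
    linarith [hFlow, hFchigh]
  -- finish
  rw [h4, h5, h6]
  have hδ : (0:ℝ) < lam ir1 - lam ir := by
    simp only [hir1, hir] at *
    linarith [hgap]
  have key : (r : ℝ) - a ≤ (∑ i ∈ F, lam i - ∑ i, lam i * x i) / (lam ir1 - lam ir) :=
    (le_div_iff₀ hδ).mpr (by linarith [hD])
  have : lam ⟨r - 1, by omega⟩ = lam ir1 := rfl
  have : lam ⟨r, hrn⟩ = lam ir := rfl
  linarith [key]
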